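/- Fix σ ∈ (0,1), c > −σ with c > −1, and a natural number j ≥ 1. Then the quantity C(N,j) · Γ(N−j+c+σ) / Γ(N+c), divided by N^σ, converges to 1/j! as N → ∞, where C(N,j) is the binomial coefficient and Γ the real Gamma function. (Consequently the expected number K_{N,j} of vertices appearing in exactly j of N cliques satisfies K_{N,j} / N^σ → α·Γ(j−σ)·Γ(1+c)/(j!·Γ(1−σ)·Γ(c+σ)), the Zipf law of Equation 2.) -/

import Mathlib

open Real Filter

private lemma aux1 (d : ℝ) : Tendsto (fun n : ℕ => ((n : ℝ) + d) / n) atTop (nhds 1) := by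
  have h : Tendsto (fun n : ℕ => 1 + d / (n : ℝ)) atTop (nhds (1 + 0)) :=
    tendsto_const_nhds.add (tendsto_const_div_atTop_nhds_zero_nat d)
  rw [add_zero] at h
  refine h.congr' ?_
  filter_upwards [eventually_gt_atTop 0] with n hn
  have hn0 : (n : ℝ) ≠ 0 := by positivity
  field_simp

private lemma aux2 (d : ℝ) : Tendsto (fun n : ℕ => (n : ℝ) / ((n : ℝ) + d)) atTop (nhds 1) := by
  have h := (aux1 d).inv₀ one_ne_zero
  simpa [inv_div] using h

private lemma Gamma_interp_le {a b t : ℝ} (ha : 0 < a) (hb : 0 < b) (ht0 : 0 ≤ t) (ht1 : t ≤ 1) :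
    Real.Gamma (t * a + (1 - t) * b) ≤ Real.Gamma a ^ t * Real.Gamma b ^ (1 - t) := by
  have hmem : 0 < t * a + (1 - t) * b := by
    rcases eq_or_lt_of_le ht1 with h | h
    · subst h; simpa using ha
    · have h1 : 0 < (1 - t) * b := mul_pos (by linarith) hb
      nlinarith [mul_nonneg ht0 ha.le]
  have hcvx := Real.convexOn_log_Gamma.2 (Set.mem_Ioi.mpr ha) (Set.mem_Ioi.mpr hb)
    ht0 (show (0:ℝ) ≤ 1 - t by linarith) (show t + (1 - t) = 1 by ring)
  simp only [Function.comp, smul_eq_mul] at hcvx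
  have hA := Real.Gamma_pos_of_pos ha
  have hB := Real.Gamma_pos_of_pos hb
  calc Real.Gamma (t * a + (1 - t) * b)
      = Real.exp (Real.log (Real.Gamma (t * a + (1 - t) * b))) :=
        (Real.exp_log (Real.Gamma_pos_of_pos hmem)).symm
    _ ≤ Real.exp (t * Real.log (Real.Gamma a) + (1 - t) * Real.log (Real.Gamma b)) :=
        Real.exp_le_exp.mpr hcvx
    _ = Real.Gamma a ^ t * Real.Gamma b ^ (1 - t) := by
        rw [Real.rpow_def_of_pos hA, Real.rpow_def_of_pos hB, ← Real.exp_add]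
        ring_nf

private lemma wendel_base {x : ℝ} (hx0 : 0 ≤ x) (hx1 : x ≤ 1) :
    Tendsto (fun n : ℕ => Real.Gamma ((n : ℝ) + x) / (Real.Gamma n * (n : ℝ) ^ x))
      atTop (nhds 1) := by
  have hlo : Tendsto (fun n : ℕ => ((n : ℝ) / ((n : ℝ) + x)) ^ (1 - x)) atTop (nhds 1) := by
    have hcont : ContinuousAt (fun y : ℝ => y ^ (1 - x)) 1 :=
      Real.continuousAt_rpow_const 1 (1 - x) (Or.inl one_ne_zero)
    simpa [Real.one_rpow, Function.comp_def] using hcont.tendsto.comp (aux2 x)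
  refine tendsto_of_tendsto_of_tendsto_of_le_of_le' hlo tendsto_const_nhds ?_ ?_
  · -- lower bound
    filter_upwards [eventually_ge_atTop 1] with n hn
    have hN : (1 : ℝ) ≤ (n : ℝ) := by exact_mod_cast hn
    have hN0 : (0 : ℝ) < n := by linarith
    have hNx : (0 : ℝ) < (n : ℝ) + x := by linarith
    have hΓn : 0 < Real.Gamma (n : ℝ) := Real.Gamma_pos_of_pos hN0
    have hΓnx : 0 < Real.Gamma ((n : ℝ) + x) := Real.Gamma_pos_of_pos hNx
    have key := Gamma_interp_le (a := (n : ℝ) + x) (b := (n : ℝ) + x + 1) hNx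
      (by linarith) hx0 hx1
    have harg : x * ((n : ℝ) + x) + (1 - x) * ((n : ℝ) + x + 1) = (n : ℝ) + 1 := by ring
    rw [harg, Real.Gamma_add_one hNx.ne', Real.Gamma_add_one hN0.ne',
      Real.mul_rpow hNx.le hΓnx.le] at key
    -- key : n * Γ n ≤ Γ(n+x)^x * ((n+x)^(1-x) * Γ(n+x)^(1-x))
    have hkey : (n : ℝ) * Real.Gamma n ≤ Real.Gamma ((n : ℝ) + x) * ((n : ℝ) + x) ^ (1 - x) := by
      have h1 : Real.Gamma ((n : ℝ) + x) ^ x * (((n : ℝ) + x) ^ (1 - x) *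
          Real.Gamma ((n : ℝ) + x) ^ (1 - x))
          = Real.Gamma ((n : ℝ) + x) * ((n : ℝ) + x) ^ (1 - x) := by
        rw [show Real.Gamma ((n : ℝ) + x) ^ x * (((n : ℝ) + x) ^ (1 - x) *
            Real.Gamma ((n : ℝ) + x) ^ (1 - x))
            = (Real.Gamma ((n : ℝ) + x) ^ x * Real.Gamma ((n : ℝ) + x) ^ (1 - x)) *
              ((n : ℝ) + x) ^ (1 - x) by ring,
          ← Real.rpow_add hΓnx, add_sub_cancel, Real.rpow_one]
      linarith [key, h1.symm.le, h1.le]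
    have hpowN : 0 < (n : ℝ) ^ x := Real.rpow_pos_of_pos hN0 x
    have hpowNx : 0 < ((n : ℝ) + x) ^ (1 - x) := Real.rpow_pos_of_pos hNx (1 - x)
    rw [Real.div_rpow hN0.le hNx.le, div_le_div_iff₀ hpowNx (by positivity)]
    have hNN : (n : ℝ) ^ (1 - x) * (n : ℝ) ^ x = n := by
      rw [← Real.rpow_add hN0, sub_add_cancel, Real.rpow_one]
    calc (n : ℝ) ^ (1 - x) * (Real.Gamma n * (n : ℝ) ^ x)
        = (n : ℝ) * Real.Gamma n := by
          rw [show (n : ℝ) ^ (1 - x) * (Real.Gamma n * (n : ℝ) ^ x)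
            = ((n : ℝ) ^ (1 - x) * (n : ℝ) ^ x) * Real.Gamma n by ring, hNN]
      _ ≤ Real.Gamma ((n : ℝ) + x) * ((n : ℝ) + x) ^ (1 - x) := hkey
  · -- upper bound
    filter_upwards [eventually_ge_atTop 1] with n hn
    have hN : (1 : ℝ) ≤ (n : ℝ) := by exact_mod_cast hn
    have hN0 : (0 : ℝ) < n := by linarith
    have hΓn : 0 < Real.Gamma (n : ℝ) := Real.Gamma_pos_of_pos hN0
    have key := Gamma_interp_le (a := (n : ℝ)) (b := (n : ℝ) + 1) hN0 (by linarith)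
      (t := 1 - x) (by linarith) (by linarith)
    have harg : (1 - x) * (n : ℝ) + (1 - (1 - x)) * ((n : ℝ) + 1) = (n : ℝ) + x := by ring
    rw [harg, show (1 : ℝ) - (1 - x) = x by ring, Real.Gamma_add_one hN0.ne',
      Real.mul_rpow hN0.le hΓn.le] at key
    -- key : Γ(n+x) ≤ Γ n ^ (1-x) * (n^x * Γ n ^ x)
    have h1 : Real.Gamma (n : ℝ) ^ (1 - x) * ((n : ℝ) ^ x * Real.Gamma (n : ℝ) ^ x)
        = Real.Gamma n * (n : ℝ) ^ x := by
      rw [show Real.Gamma (n : ℝ) ^ (1 - x) * ((n : ℝ) ^ x * Real.Gamma (n : ℝ) ^ x)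
          = (Real.Gamma (n : ℝ) ^ (1 - x) * Real.Gamma (n : ℝ) ^ x) * (n : ℝ) ^ x by ring,
        ← Real.rpow_add hΓn, sub_add_cancel, Real.rpow_one]
    rw [h1] at key
    have hpos : 0 < Real.Gamma (n : ℝ) * (n : ℝ) ^ x := by
      exact mul_pos hΓn (Real.rpow_pos_of_pos hN0 x)
    exact (div_le_one hpos).mpr key

private lemma wendel_step {x : ℝ}
    (h : Tendsto (fun n : ℕ => Real.Gamma ((n : ℝ) + x) / (Real.Gamma n * (n : ℝ) ^ x))
      atTop (nhds 1)) :
    Tendsto (fun n : ℕ => Real.Gamma ((n : ℝ) + (x + 1)) / (Real.Gamma n * (n : ℝ) ^ (x + 1)))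
      atTop (nhds 1) := by
  have h2 : Tendsto (fun n : ℕ => (((n : ℝ) + x) / n) *
      (Real.Gamma ((n : ℝ) + x) / (Real.Gamma n * (n : ℝ) ^ x))) atTop (nhds (1 * 1)) :=
    (aux1 x).mul h
  rw [one_mul] at h2
  refine h2.congr' ?_
  have hev : ∀ᶠ n : ℕ in atTop, (1 : ℝ) ≤ (n : ℝ) ∧ 0 < (n : ℝ) + x := by
    have hcast := tendsto_natCast_atTop_atTop (R := ℝ)
    filter_upwards [hcast.eventually_ge_atTop 1, hcast.eventually_gt_atTop (-x)] with n h1 h2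
    exact ⟨h1, by linarith⟩
  filter_upwards [hev] with n hn
  obtain ⟨h1, hnx⟩ := hn
  have hn0 : (n : ℝ) ≠ 0 := by linarith
  rw [show (n : ℝ) + (x + 1) = ((n : ℝ) + x) + 1 by ring, Real.Gamma_add_one hnx.ne',
    Real.rpow_add_one hn0, div_mul_div_comm]
  congr 1
  ring

private lemma wendel_step' {x : ℝ}
    (h : Tendsto (fun n : ℕ => Real.Gamma ((n : ℝ) + (x + 1)) / (Real.Gamma n * (n : ℝ) ^ (x + 1)))
      atTop (nhds 1)) :
    Tendsto (fun n : ℕ => Real.Gamma ((n : ℝ) + x) / (Real.Gamma n * (n : ℝ) ^ x))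
      atTop (nhds 1) := by
  have h2 : Tendsto (fun n : ℕ => ((n : ℝ) / ((n : ℝ) + x)) *
      (Real.Gamma ((n : ℝ) + (x + 1)) / (Real.Gamma n * (n : ℝ) ^ (x + 1)))) atTop
      (nhds (1 * 1)) := (aux2 x).mul h
  rw [one_mul] at h2
  refine h2.congr' ?_
  have hev : ∀ᶠ n : ℕ in atTop, (1 : ℝ) ≤ (n : ℝ) ∧ 0 < (n : ℝ) + x := by
    have hcast := tendsto_natCast_atTop_atTop (R := ℝ)
    filter_upwards [hcast.eventually_ge_atTop 1, hcast.eventually_gt_atTop (-x)] with n h1 h2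
    exact ⟨h1, by linarith⟩
  filter_upwards [hev] with n hn
  obtain ⟨h1, hnx⟩ := hn
  have hn0 : (0 : ℝ) < n := by linarith
  have hΓn : 0 < Real.Gamma (n : ℝ) := Real.Gamma_pos_of_pos hn0
  have hp : 0 < (n : ℝ) ^ x := Real.rpow_pos_of_pos hn0 x
  rw [show (n : ℝ) + (x + 1) = ((n : ℝ) + x) + 1 by ring, Real.Gamma_add_one hnx.ne',
    Real.rpow_add_one hn0.ne']
  field_simp

private lemma wendel_int {x : ℝ} (hx0 : 0 ≤ x) (hx1 : x ≤ 1) : ∀ m : ℤ,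
    Tendsto (fun n : ℕ => Real.Gamma ((n : ℝ) + (x + m)) / (Real.Gamma n * (n : ℝ) ^ (x + m)))
      atTop (nhds 1) := by
  intro m
  induction m using Int.induction_on with
  | zero => simpa using wendel_base hx0 hx1
  | succ k ih =>
    have heq : x + ((k : ℤ) + 1 : ℤ) = (x + ((k : ℤ) : ℝ)) + 1 := by push_cast; ring
    rw [heq]
    exact wendel_step ih
  | pred k ih =>
    apply wendel_step'
    have heq : (x + ((-(k : ℤ) - 1 : ℤ) : ℝ)) + 1 = x + ((-(k : ℤ) : ℤ) : ℝ) := by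
      push_cast; ring
    rw [heq]
    exact ih

private lemma wendel (x : ℝ) :
    Tendsto (fun n : ℕ => Real.Gamma ((n : ℝ) + x) / (Real.Gamma n * (n : ℝ) ^ x))
      atTop (nhds 1) := by
  have h := wendel_int (Int.fract_nonneg x) (Int.fract_lt_one x).le ⌊x⌋
  rwa [Int.fract_add_floor] at h

private lemma choose_div_pow_tendsto (j : ℕ) :
    Tendsto (fun N : ℕ => (N.choose j : ℝ) / (N : ℝ) ^ j) atTop
      (nhds (1 / (Nat.factorial j : ℝ))) := by
  have hprod : Tendsto (fun N : ℕ => ∏ i ∈ Finset.range j, (((N : ℝ) - i) / N)) atTop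
      (nhds (∏ _i ∈ Finset.range j, (1 : ℝ))) := by
    refine tendsto_finset_prod _ fun i _ => ?_
    simpa [sub_eq_add_neg] using aux1 (-(i : ℝ))
  have h2 : Tendsto (fun N : ℕ => (∏ i ∈ Finset.range j, (((N : ℝ) - i) / N)) /
      (Nat.factorial j : ℝ)) atTop (nhds (1 / (Nat.factorial j : ℝ))) := by
    simpa using hprod.div_const (Nat.factorial j : ℝ)
  refine h2.congr' ?_
  filter_upwards [eventually_ge_atTop j] with N hN
  have hfact : (Nat.factorial j : ℝ) ≠ 0 := by
    exact_mod_cast (Nat.factorial_pos j).ne'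
  have hcast : (N.choose j : ℝ) = (∏ i ∈ Finset.range j, ((N : ℝ) - i)) / (Nat.factorial j : ℝ) := by
    have h1 : (N.descFactorial j : ℝ) = ∏ i ∈ Finset.range j, ((N : ℝ) - i) := by
      rw [Nat.descFactorial_eq_prod_range, Nat.cast_prod]
      refine Finset.prod_congr rfl fun i hi => ?_
      exact Nat.cast_sub (le_trans (Finset.mem_range.mp hi).le hN)
    have h3 : (N.descFactorial j : ℝ) = (Nat.factorial j : ℝ) * (N.choose j : ℝ) := by
      exact_mod_cast congrArg (Nat.cast : ℕ → ℝ) (Nat.descFactorial_eq_factorial_mul_choose N j)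
    rw [← h1, h3, mul_div_cancel_left₀ _ hfact]
  rw [hcast, Finset.prod_div_distrib, Finset.prod_const, Finset.card_range]
  ring

/-- Zipf law asymptotics: for fixed `j ≥ 1`,
`C(N,j)·Γ(N−j+c+σ)/Γ(N+c) / N^σ → 1/j!` as `N → ∞`. -/
theorem choose_mul_gammaRatio_tendsto (σ c : ℝ) (j : ℕ)
    (hσ : σ ∈ Set.Ioo (0 : ℝ) 1) (hc : -σ < c) (hc1 : -1 < c) (hj : 1 ≤ j) :
    Tendsto (fun N : ℕ =>
        (N.choose j : ℝ) * Real.Gamma ((N : ℝ) - (j : ℝ) + c + σ)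
          / Real.Gamma ((N : ℝ) + c) / (N : ℝ) ^ σ)
      atTop (nhds (1 / (Nat.factorial j : ℝ))) := by
  set a : ℝ := c + σ - j with ha
  have W1 := wendel a
  have W2 : Tendsto (fun n : ℕ => (Real.Gamma ((n : ℝ)) * (n : ℝ) ^ c) /
      Real.Gamma ((n : ℝ) + c)) atTop (nhds 1) := by
    have h := (wendel c).inv₀ one_ne_zero
    rw [inv_one] at h
    simpa [inv_div] using h
  have H : Tendsto (fun N : ℕ => ((N.choose j : ℝ) / (N : ℝ) ^ j) *
      (Real.Gamma ((N : ℝ) + a) / (Real.Gamma N * (N : ℝ) ^ a) *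
        ((Real.Gamma ((N : ℝ)) * (N : ℝ) ^ c) / Real.Gamma ((N : ℝ) + c)))) atTop
      (nhds (1 / (Nat.factorial j : ℝ))) := by
    have h := (choose_div_pow_tendsto j).mul (W1.mul W2)
    simpa using h
  refine H.congr' ?_
  have hev : ∀ᶠ N : ℕ in atTop, (1 : ℝ) ≤ (N : ℝ) ∧ 0 < (N : ℝ) + c := by
    have hcast := tendsto_natCast_atTop_atTop (R := ℝ)
    filter_upwards [hcast.eventually_ge_atTop 1, hcast.eventually_gt_atTop (-c)] with n h1 h2
    exact ⟨h1, by linarith⟩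
  filter_upwards [hev] with N hN
  obtain ⟨h1, h2⟩ := hN
  have hN0 : (0 : ℝ) < N := by linarith
  have hΓN : 0 < Real.Gamma (N : ℝ) := Real.Gamma_pos_of_pos hN0
  have hΓNc : 0 < Real.Gamma ((N : ℝ) + c) := Real.Gamma_pos_of_pos h2
  have harg : (N : ℝ) - j + c + σ = (N : ℝ) + a := by rw [ha]; ring
  have hpow : (N : ℝ) ^ (j : ℝ) * (N : ℝ) ^ a = (N : ℝ) ^ σ * (N : ℝ) ^ c := by
    rw [← Real.rpow_add hN0, ← Real.rpow_add hN0]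
    congr 1
    rw [ha]; ring
  have hja : ((N : ℝ)) ^ j = (N : ℝ) ^ (j : ℝ) := (Real.rpow_natCast _ j).symm
  have hpσ : 0 < (N : ℝ) ^ σ := Real.rpow_pos_of_pos hN0 σ
  have hpc : 0 < (N : ℝ) ^ c := Real.rpow_pos_of_pos hN0 c
  have hpa : 0 < (N : ℝ) ^ a := Real.rpow_pos_of_pos hN0 a
  have hpj : 0 < (N : ℝ) ^ (j : ℝ) := Real.rpow_pos_of_pos hN0 _
  rw [harg, hja]
  have hpow' : (N : ℝ) ^ j * (N : ℝ) ^ a = (N : ℝ) ^ σ * (N : ℝ) ^ c := by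
    rw [hja]; exact hpow
  field_simp
  linear_combination (-((N.choose j : ℝ) * Real.Gamma ((N : ℝ) + a))) * hpow
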